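/- arXiv:2001.03112 — 8 statements merged into one kernel-verified Lean document; each statement's English description precedes it below -/
import Mathlib

section
/- Let X be a metrizable topological space and let E be a symmetric open subset of X × X containing the diagonal. Then there exists a symmetric open subset F of X × X containing the diagonal such that F ∘ F ⊆ E, where F ∘ F = {(a,c) : ∃ b, (a,b) ∈ F and (b,c) ∈ F}. -/
/-- In a metrizable topological space, every symmetric open set
`E ⊆ X × X` containing the diagonal contains the composition `F ∘ F` of a
symmetric open set `F ⊆ X × X` containing the diagonal. -/
theorem exists_symmetric_open_square_subset {X : Type*} [TopologicalSpace X]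
    [TopologicalSpace.MetrizableSpace X]
    (E : Set (X × X)) (hEopen : IsOpen E)
    (hEsymm : ∀ p : X × X, p ∈ E → (p.2, p.1) ∈ E)
    (hEdiag : ∀ x : X, (x, x) ∈ E) :
    ∃ F : Set (X × X), IsOpen F ∧ (∀ p : X × X, p ∈ F → (p.2, p.1) ∈ F) ∧
      (∀ x : X, (x, x) ∈ F) ∧
      {p : X × X | ∃ b : X, (p.1, b) ∈ F ∧ (b, p.2) ∈ F} ⊆ E := by
  letI : MetricSpace X := TopologicalSpace.metrizableSpaceMetric X
  -- choose for each x a radius with product ball inside E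
  have hex : ∀ x : X, ∃ ε > 0, Metric.ball x ε ×ˢ Metric.ball x ε ⊆ E := by
    intro x
    obtain ⟨ε, hε, hsub⟩ := Metric.isOpen_iff.mp hEopen (x, x) (hEdiag x)
    exact ⟨ε, hε, by rw [ball_prod_same]; exact hsub⟩
  choose ε hεpos hεsub using hex
  refine ⟨⋃ x : X, Metric.ball x (ε x / 4) ×ˢ Metric.ball x (ε x / 4), ?_, ?_, ?_, ?_⟩
  · exact isOpen_iUnion fun x => (Metric.isOpen_ball).prod Metric.isOpen_ball
  · rintro p hp
    simp only [Set.mem_iUnion, Set.mem_prod] at hp ⊢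
    obtain ⟨x, h1, h2⟩ := hp
    exact ⟨x, h2, h1⟩
  · intro x
    simp only [Set.mem_iUnion, Set.mem_prod]
    exact ⟨x, Metric.mem_ball_self (by linarith [hεpos x]),
      Metric.mem_ball_self (by linarith [hεpos x])⟩
  · rintro ⟨a, c⟩ ⟨b, hab, hbc⟩
    simp only [Set.mem_iUnion, Set.mem_prod, Metric.mem_ball] at hab hbc
    obtain ⟨x, hax, hbx⟩ := hab
    obtain ⟨y, hby, hcy⟩ := hbc
    rcases le_total (ε y) (ε x) with h | h
    · apply hεsub x
      have hyx : dist y x < ε x / 2 := by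
        calc dist y x ≤ dist y b + dist b x := dist_triangle _ _ _
          _ < ε y / 4 + ε x / 4 := by
              have := dist_comm b y ▸ hby; linarith [dist_comm y b ▸ hby]
          _ ≤ ε x / 2 := by linarith
      have hcx : dist c x < ε x := by
        calc dist c x ≤ dist c y + dist y x := dist_triangle _ _ _
          _ < ε y / 4 + ε x / 2 := by linarith
          _ ≤ ε x := by linarith [hεpos x]
      exact ⟨Metric.mem_ball.mpr (show dist a x < ε x by linarith [hεpos x]),
        Metric.mem_ball.mpr hcx⟩
    · refine hEsymm (c, a) (hεsub y ?_)
      have hxy : dist x y < ε y / 2 := by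
        calc dist x y ≤ dist x b + dist b y := dist_triangle _ _ _
          _ < ε x / 4 + ε y / 4 := by linarith [dist_comm x b ▸ hbx]
          _ ≤ ε y / 2 := by linarith
      have hay : dist a y < ε y := by
        calc dist a y ≤ dist a x + dist x y := dist_triangle _ _ _
          _ < ε x / 4 + ε y / 2 := by linarith
          _ ≤ ε y := by linarith [hεpos y]
      exact ⟨Metric.mem_ball.mpr (show dist c y < ε y by linarith [hεpos y]),
        Metric.mem_ball.mpr hay⟩
end

section
/- Let X be a metrizable topological space. The collection of all symmetric subsets of X × X that contain an open set containing the diagonal is the set of entourages of a uniform structure on X whose induced topology is the topology of X, and this uniform structure contains every uniform structure on X compatible with the topology; that is, it is the finest uniformity compatible with the topology of X. -/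
open Set Metric Filter Uniformity
open scoped SetRel

theorem key_lemma {X : Type*} [MetricSpace X] {W : Set (X × X)} (hW : IsOpen W)
    (hd : ∀ x : X, (x, x) ∈ W) :
    ∃ V : Set (X × X), IsOpen V ∧ (∀ p : X × X, p ∈ V → (p.2, p.1) ∈ V) ∧
      (∀ x : X, (x, x) ∈ V) ∧ V ○ V ⊆ W := by
  set S : X → Set ℝ := fun x => {r | r ≤ 1 ∧ ball x r ×ˢ ball x r ⊆ W} with hS
  have h0 : ∀ x, (0 : ℝ) ∈ S x := by
    intro x
    refine ⟨zero_le_one, ?_⟩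
    simp [Set.prod_subset_iff]
  have hne : ∀ x, (S x).Nonempty := fun x => ⟨0, h0 x⟩
  have hbdd : ∀ x, BddAbove (S x) := fun x => ⟨1, fun r hr => hr.1⟩
  set f : X → ℝ := fun x => sSup (S x) with hf
  have fpos : ∀ x, 0 < f x := by
    intro x
    obtain ⟨ε, hε, hball⟩ := Metric.isOpen_iff.1 hW (x, x) (hd x)
    have hmem : min (ε / 2) 1 ∈ S x := by
      refine ⟨min_le_right _ _, ?_⟩
      rw [ball_prod_same]
      exact (ball_subset_ball (by linarith [min_le_left (ε/2) 1])).trans hball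
    exact lt_of_lt_of_le (lt_min (by linarith) one_pos) (le_csSup (hbdd x) hmem)
  have hlip : ∀ x y : X, f x ≤ f y + dist x y := by
    intro x y
    refine csSup_le (hne x) fun r hr => ?_
    have : r - dist x y ∈ S y := by
      refine ⟨(sub_le_self _ dist_nonneg).trans hr.1, ?_⟩
      refine (Set.prod_mono ?_ ?_).trans hr.2 <;>
        exact ball_subset (by rw [dist_comm]; linarith)
    linarith [le_csSup (hbdd y) this]
  have fcont : Continuous f := by
    refine LipschitzWith.continuous (K := 1) (LipschitzWith.of_dist_le_mul fun x y => ?_)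
    rw [Real.dist_eq, NNReal.coe_one, one_mul, abs_sub_le_iff]
    constructor <;> [skip; rw [dist_comm]] <;> [linarith [hlip x y]; linarith [hlip y x]]
  refine ⟨{p : X × X | dist p.1 p.2 < f p.1 / 4 ∧ dist p.1 p.2 < f p.2 / 4}, ?_, ?_, ?_, ?_⟩
  · exact IsOpen.inter
      (isOpen_lt (continuous_fst.dist continuous_snd) ((fcont.comp continuous_fst).div_const 4))
      (isOpen_lt (continuous_fst.dist continuous_snd) ((fcont.comp continuous_snd).div_const 4))
  · rintro ⟨x, y⟩ ⟨h1, h2⟩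
    exact ⟨by rwa [dist_comm], by rwa [dist_comm]⟩
  · intro x; simpa using fpos x
  · rintro ⟨x, z⟩ ⟨y, ⟨hxy1, hxy2⟩, ⟨hyz1, hyz2⟩⟩
    have hfy : f y ≤ f x + dist x y := by rw [dist_comm x y]; exact hlip y x
    have hxz : dist x z < f x := by
      have := dist_triangle x y z
      have := fpos x
      linarith
    obtain ⟨r, hr, hltr⟩ := exists_lt_of_lt_csSup (hne x) hxz
    exact hr.2 ⟨mem_ball_self (lt_of_le_of_lt dist_nonneg hltr),
      by rw [mem_ball, dist_comm]; exact hltr⟩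

theorem aux_fine {X : Type*} [t : TopologicalSpace X] (m : MetricSpace X)
    (hm : m.toUniformSpace.toTopologicalSpace = t) :
    ∃ U : UniformSpace X,
      U.toTopologicalSpace = t ∧
      (∀ S : Set (X × X), S ∈ @uniformity X U ↔
        ∃ T : Set (X × X), T ⊆ S ∧ (∀ p : X × X, p ∈ T → (p.2, p.1) ∈ T) ∧
          ∃ V : Set (X × X), V ⊆ T ∧ IsOpen V ∧ ∀ x : X, (x, x) ∈ V) ∧
      (∀ S : Set (X × X),
        ((∀ p : X × X, p ∈ S → (p.2, p.1) ∈ S) ∧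
          ∃ V : Set (X × X), V ⊆ S ∧ IsOpen V ∧ ∀ x : X, (x, x) ∈ V) →
        S ∈ @uniformity X U) ∧
      (∀ U' : UniformSpace X, U'.toTopologicalSpace = t →
        ∀ S : Set (X × X), S ∈ @uniformity X U' → S ∈ @uniformity X U) := by
  classical
  subst hm
  letI := m
  -- the filter of sets containing an open symmetric neighborhood of the diagonal
  set F : Filter (X × X) :=
    { sets := {s | ∃ V : Set (X × X), V ⊆ s ∧ IsOpen V ∧
        (∀ p : X × X, p ∈ V → (p.2, p.1) ∈ V) ∧ ∀ x : X, (x, x) ∈ V}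
      univ_sets := ⟨univ, subset_rfl, isOpen_univ, fun _ _ => trivial, fun _ => trivial⟩
      sets_of_superset := by
        rintro s s' ⟨V, hVs, hVo, hVsym, hVd⟩ hss'
        exact ⟨V, hVs.trans hss', hVo, hVsym, hVd⟩
      inter_sets := by
        rintro s s' ⟨V, hVs, hVo, hVsym, hVd⟩ ⟨V', hVs', hVo', hVsym', hVd'⟩
        exact ⟨V ∩ V', inter_subset_inter hVs hVs', hVo.inter hVo',
          fun p hp => ⟨hVsym p hp.1, hVsym' p hp.2⟩, fun x => ⟨hVd x, hVd' x⟩⟩ } with hF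
  have memF : ∀ s : Set (X × X), s ∈ F ↔ ∃ V : Set (X × X), V ⊆ s ∧ IsOpen V ∧
      (∀ p : X × X, p ∈ V → (p.2, p.1) ∈ V) ∧ ∀ x : X, (x, x) ∈ V := fun s => Iff.rfl
  -- basic sets belong to F even if the witness open set is not symmetric
  have memF' : ∀ s : Set (X × X),
      (∃ V : Set (X × X), V ⊆ s ∧ IsOpen V ∧ ∀ x : X, (x, x) ∈ V) → s ∈ F := by
    rintro s ⟨V, hVs, hVo, hVd⟩
    refine (memF s).2 ⟨V ∩ Prod.swap ⁻¹' V, (inter_subset_left).trans hVs,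
      hVo.inter (hVo.preimage continuous_swap), ?_, fun x => ⟨hVd x, hVd x⟩⟩
    rintro ⟨a, b⟩ ⟨h1, h2⟩
    exact ⟨h2, h1⟩
  -- metric entourages are in F
  have hmetric : ∀ ε : ℝ, 0 < ε → {p : X × X | dist p.1 p.2 < ε} ∈ F := by
    intro ε hε
    refine memF' _ ⟨_, subset_rfl, isOpen_lt (continuous_fst.dist continuous_snd)
      continuous_const, fun x => ?_⟩
    simpa using hε
  -- the uniform core
  let core : UniformSpace.Core X := UniformSpace.Core.mk' F
    (by
      rintro r ⟨V, hVr, _, _, hVd⟩ x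
      exact hVr (hVd x))
    (by
      rintro r ⟨V, hVr, hVo, hVsym, hVd⟩
      exact (memF _).2 ⟨V, fun p hp => hVr (hVsym p hp), hVo, hVsym, hVd⟩)
    (by
      rintro r ⟨V, hVr, hVo, hVsym, hVd⟩
      obtain ⟨V', hV'o, hV'sym, hV'd, hV'comp⟩ := key_lemma hVo hVd
      exact ⟨V', (memF _).2 ⟨V', subset_rfl, hV'o, hV'sym, hV'd⟩, hV'comp.trans hVr⟩)
  have htopo : m.toUniformSpace.toTopologicalSpace = core.toTopologicalSpace := by
    refine TopologicalSpace.ext_nhds fun x => ?_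
    rw [core.nhds_toTopologicalSpace]
    apply le_antisymm
    · intro n hn
      obtain ⟨s, hsF, hsn⟩ := mem_comap.1 hn
      obtain ⟨V, hVs, hVo, _, hVd⟩ := hsF
      refine mem_of_superset ?_ ((preimage_mono hVs).trans hsn)
      exact (hVo.preimage (Continuous.prodMk_right x)).mem_nhds (hVd x)
    · intro n hn
      obtain ⟨ε, hε, hball⟩ := Metric.mem_nhds_iff.1 hn
      refine mem_of_superset (preimage_mem_comap (hmetric ε hε)) ?_
      intro y hy
      exact hball (by simpa [mem_ball, dist_comm] using hy)
  refine ⟨UniformSpace.ofCoreEq core _ htopo, rfl, ?_, ?_, ?_⟩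
  · -- characterization of entourages
    intro S
    constructor
    · rintro ⟨V, hVS, hVo, hVsym, hVd⟩
      exact ⟨V, hVS, hVsym, V, subset_rfl, hVo, hVd⟩
    · rintro ⟨T, hTS, _, V, hVT, hVo, hVd⟩
      exact memF' S ⟨V, hVT.trans hTS, hVo, hVd⟩
  · rintro S ⟨_, V, hVS, hVo, hVd⟩
    exact memF' S ⟨V, hVS, hVo, hVd⟩
  · intro U' hU' S hS
    obtain ⟨V, ⟨hV, hVo, hVsym⟩, hVS⟩ :=
      (@uniformity_hasBasis_open_symmetric X U').mem_iff.1 hS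
    rw [hU'] at hVo
    exact memF' S ⟨V, hVS, hVo, fun x => refl_mem_uniformity hV⟩


/-- On a metrizable topological space, the collection of all
symmetric subsets of `X × X` containing an open set containing the diagonal
generates a uniform structure (it is a basis of entourages for it) whose
topology is the given one, and this uniform structure is the finest uniformity
compatible with the topology: it contains every compatible uniform structure. -/
theorem exists_fine_uniformity {X : Type*} [t : TopologicalSpace X]
    [TopologicalSpace.MetrizableSpace X] :
    ∃ U : UniformSpace X,
      U.toTopologicalSpace = t ∧
      (∀ S : Set (X × X), S ∈ @uniformity X U ↔
        ∃ T : Set (X × X), T ⊆ S ∧ (∀ p : X × X, p ∈ T → (p.2, p.1) ∈ T) ∧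
          ∃ V : Set (X × X), V ⊆ T ∧ IsOpen V ∧ ∀ x : X, (x, x) ∈ V) ∧
      (∀ S : Set (X × X),
        ((∀ p : X × X, p ∈ S → (p.2, p.1) ∈ S) ∧
          ∃ V : Set (X × X), V ⊆ S ∧ IsOpen V ∧ ∀ x : X, (x, x) ∈ V) →
        S ∈ @uniformity X U) ∧
      (∀ U' : UniformSpace X, U'.toTopologicalSpace = t →
        ∀ S : Set (X × X), S ∈ @uniformity X U' → S ∈ @uniformity X U) := by
  obtain ⟨m, hm⟩ : ∃ m : MetricSpace X, m.toUniformSpace.toTopologicalSpace = t :=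
    ⟨TopologicalSpace.metrizableSpaceMetric X, rfl⟩
  exact aux_fine m hm
end

section
/- If a uniform space X has a chain component that is not uniformly open, then X has infinitely many chain components. -/
namespace WC

/-- A chain for the relation `R`: consecutive entries of the list satisfy `R`. -/
def IsChain {Y : Type*} (R : Y → Y → Prop) (α : List Y) : Prop :=
  List.Chain' R α

/-- A basic move between chains: adding or removing a single point other than an
endpoint (the first and last points, as values, are unchanged). -/
def Move {Y : Type*} (R : Y → Y → Prop) (α β : List Y) : Prop :=
  IsChain R α ∧ IsChain R β ∧ α.head? = β.head? ∧ α.getLast? = β.getLast? ∧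
    ∃ (γ δ : List Y) (x : Y),
      (α = γ ++ δ ∧ β = γ ++ x :: δ) ∨ (β = γ ++ δ ∧ α = γ ++ x :: δ)

/-- Two chains are homotopic (relative to `R`) if they are connected by a finite
sequence of basic moves. -/
def Homotopic {Y : Type*} (R : Y → Y → Prop) : List Y → List Y → Prop :=
  Relation.ReflTransGen (Move R)

/-- The chain `α` starts at `x` and ends at `y`. -/
def FromTo {Y : Type*} (α : List Y) (x y : Y) : Prop :=
  α.head? = some x ∧ α.getLast? = some y

end WC
/-- An entourage: a symmetric member of the uniformity. -/
def Entourage (X : Type*) [UniformSpace X] (E : Set (X × X)) : Prop :=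
  E ∈ uniformity X ∧ ∀ p : X × X, p ∈ E → (p.2, p.1) ∈ E

/-- The relation determined by a subset of `X × X`. -/
def URel {X : Type*} (E : Set (X × X)) : X → X → Prop :=
  fun x y => (x, y) ∈ E

/-- An `E`-chain. -/
def UChain {X : Type*} (E : Set (X × X)) (α : List X) : Prop :=
  WC.IsChain (URel E) α

/-- `E`-homotopy of chains. -/
def UHomotopic {X : Type*} (E : Set (X × X)) : List X → List X → Prop :=
  WC.Homotopic (URel E)

/-- A uniform space is chain connected if any two points are joined by an
`E`-chain for every entourage `E`. -/
def UChainConnected (X : Type*) [UniformSpace X] : Prop :=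
  ∀ E : Set (X × X), Entourage X E → ∀ x y : X,
    ∃ α : List X, UChain E α ∧ WC.FromTo α x y

/-- For entourages `F ⊆ E`, `E` is weakly `F`-chained if every pair in `F` is
joined by arbitrarily fine chains `E`-homotopic to the two-point chain. -/
def WeaklyFChained {X : Type*} [UniformSpace X] (E F : Set (X × X)) : Prop :=
  ∀ x y : X, (x, y) ∈ F → ∀ D : Set (X × X), Entourage X D →
    ∃ α : List X, UChain D α ∧ WC.FromTo α x y ∧ UHomotopic E α [x, y]

/-- A uniform space is weakly chained if it is chain connected and its
uniformity has a basis of entourages `E`, each weakly `F`-chained for some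
entourage `F ⊆ E`. -/
def UWeaklyChained (X : Type*) [UniformSpace X] : Prop :=
  UChainConnected X ∧
    ∀ G ∈ uniformity X, ∃ E : Set (X × X), Entourage X E ∧ E ⊆ G ∧
      ∃ F : Set (X × X), Entourage X F ∧ F ⊆ E ∧ WeaklyFChained E F

/-- `U` is uniformly `E`-open: with every point it contains its `E`-ball. -/
def UOpen {X : Type*} (E : Set (X × X)) (U : Set X) : Prop :=
  ∀ a ∈ U, ∀ z : X, (a, z) ∈ E → z ∈ U

/-- `U` is uniformly open: uniformly `E`-open for some entourage `E`. -/
def UniformlyOpen {X : Type*} [UniformSpace X] (U : Set X) : Prop :=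
  ∃ E : Set (X × X), Entourage X E ∧ UOpen E U

/-- The chain component of `x`: all points joined to `x` by an `E`-chain for
every entourage `E`. -/
def ChainComp {X : Type*} [UniformSpace X] (x : X) : Set X :=
  {y : X | ∀ E : Set (X × X), Entourage X E →
    ∃ α : List X, UChain E α ∧ WC.FromTo α x y}


section Helpers

variable {X : Type*} [UniformSpace X]

lemma mem_chainComp_self (z : X) : z ∈ ChainComp z := by
  intro E _
  exact ⟨[z], List.isChain_singleton z, rfl, rfl⟩

lemma chain_reverse {E : Set (X × X)} (hE : Entourage X E) {α : List X} {x y : X}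
    (hc : UChain E α) (hft : WC.FromTo α x y) :
    UChain E α.reverse ∧ WC.FromTo α.reverse y x := by
  refine ⟨?_, ?_, ?_⟩
  · rw [UChain, WC.IsChain, List.Chain', List.isChain_reverse]
    exact hc.imp (fun a b hab => hE.2 (a, b) hab)
  · rw [List.head?_reverse]; exact hft.2
  · rw [List.getLast?_reverse]; exact hft.1

lemma chain_append {E : Set (X × X)} (hE : Entourage X E) {α β : List X} {x y z : X}
    (hc : UChain E α) (hft : WC.FromTo α x y)
    (hc' : UChain E β) (hft' : WC.FromTo β y z) :
    UChain E (α ++ β) ∧ WC.FromTo (α ++ β) x z := by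
  have hα : α ≠ [] := by intro h; rw [h] at hft; exact absurd hft.1 (by simp)
  have hβ : β ≠ [] := by intro h; rw [h] at hft'; exact absurd hft'.1 (by simp)
  refine ⟨hc.append hc' ?_, ?_, ?_⟩
  · intro a ha b hb
    rw [hft.2] at ha; rw [hft'.1] at hb
    rw [Option.mem_some_iff] at ha hb
    rw [← ha, ← hb]
    exact refl_mem_uniformity hE.1
  · rw [List.head?_append_of_ne_nil _ hα]; exact hft.1
  · rw [List.getLast?_append_of_ne_nil _ hβ]; exact hft'.2

lemma mem_chainComp_trans {x y z : X} (hy : y ∈ ChainComp x) (hz : z ∈ ChainComp y) :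
    z ∈ ChainComp x := by
  intro E hE
  obtain ⟨α, hα, hftα⟩ := hy E hE
  obtain ⟨β, hβ, hftβ⟩ := hz E hE
  exact ⟨α ++ β, chain_append hE hα hftα hβ hftβ⟩

lemma mem_chainComp_symm {x y : X} (hy : y ∈ ChainComp x) : x ∈ ChainComp y := by
  intro E hE
  obtain ⟨α, hα, hftα⟩ := hy E hE
  exact ⟨α.reverse, (chain_reverse hE hα hftα).1, (chain_reverse hE hα hftα).2⟩

lemma chainComp_eq_of_mem {x y : X} (hy : y ∈ ChainComp x) : ChainComp y = ChainComp x := by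
  ext z
  exact ⟨fun hz => mem_chainComp_trans hy hz,
    fun hz => mem_chainComp_trans (mem_chainComp_symm hy) hz⟩

end Helpers

/-- If a uniform space has a chain component that is not
uniformly open, then it has infinitely many chain components. -/
theorem infinite_chainComps_of_not_uniformlyOpen {X : Type*} [UniformSpace X]
    (x : X) (h : ¬ UniformlyOpen (ChainComp x)) :
    {C : Set X | ∃ y : X, C = ChainComp y}.Infinite := by
  by_contra hninf
  rw [Set.not_infinite] at hninf
  apply h
  classical
  have : Nonempty X := ⟨x⟩
  have hrep : ∀ C ∈ {C : Set X | ∃ y : X, C = ChainComp y}, ∃ y : X, C = ChainComp y :=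
    fun C hC => hC
  choose! rep hrepC using hrep
  have hsep : ∀ C : Set X, ∃ E : Set (X × X), Entourage X E ∧
      (rep C ∉ ChainComp x → ¬ ∃ α : List X, UChain E α ∧ WC.FromTo α x (rep C)) := by
    intro C
    by_cases hc : rep C ∈ ChainComp x
    · exact ⟨Set.univ, ⟨Filter.univ_mem, fun p _ => trivial⟩, fun hn => absurd hc hn⟩
    · simp only [ChainComp, Set.mem_setOf_eq, not_forall] at hc
      obtain ⟨E, hE, hno⟩ := hc
      exact ⟨E, hE, fun _ => hno⟩
  choose D hDent hDsep using hsep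
  refine ⟨⋂ C ∈ {C : Set X | ∃ y : X, C = ChainComp y}, D C, ⟨?_, ?_⟩, ?_⟩
  · exact (Filter.biInter_mem hninf).2 fun C _ => (hDent C).1
  · intro p hp
    simp only [Set.mem_iInter] at hp ⊢
    exact fun C hC => (hDent C).2 p (hp C hC)
  · intro a ha z hz
    have hCz : ChainComp z ∈ {C : Set X | ∃ y : X, C = ChainComp y} := ⟨z, rfl⟩
    have hrepz : ChainComp z = ChainComp (rep (ChainComp z)) := hrepC _ hCz
    by_cases hr : rep (ChainComp z) ∈ ChainComp x
    · have heq : ChainComp z = ChainComp x := by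
        rw [hrepz]; exact chainComp_eq_of_mem hr
      rw [← heq]; exact mem_chainComp_self z
    · exfalso
      apply hDsep (ChainComp z) hr
      have hE : Entourage X (D (ChainComp z)) := hDent _
      obtain ⟨α, hα, hftα⟩ := ha (D (ChainComp z)) hE
      have hzE : (a, z) ∈ D (ChainComp z) := by
        simp only [Set.mem_iInter] at hz
        exact hz _ hCz
      have hmid : UChain (D (ChainComp z)) [a, z] ∧ WC.FromTo [a, z] a z :=
        ⟨List.isChain_pair.2 hzE, rfl, rfl⟩
      have hrz : rep (ChainComp z) ∈ ChainComp z := by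
        have := mem_chainComp_self (rep (ChainComp z))
        rw [← hrepz] at this
        exact this
      obtain ⟨β, hβ, hftβ⟩ := hrz (D (ChainComp z)) hE
      have h1 := chain_append hE hα hftα hmid.1 hmid.2
      have h2 := chain_append hE h1.1 h1.2 hβ hftβ
      exact ⟨_, h2⟩
end

section
/- Let X be a weakly chained uniform space and let f : X → Y be a bi-uniformly continuous surjection onto a uniform space Y; that is, f is uniformly continuous, surjective, and for every entourage E of X the image (f × f)(E) is an entourage of Y. Then Y is weakly chained. -/
section Aux
variable {X Y : Type*}

theorem wc_chain_map (f : X → Y) {R : X → X → Prop} {S : Y → Y → Prop}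
    (h : ∀ a b, R a b → S (f a) (f b)) {α : List X} (hα : WC.IsChain R α) :
    WC.IsChain S (α.map f) := List.isChain_map_of_isChain f h hα

theorem wc_move_map (f : X → Y) {R : X → X → Prop} {S : Y → Y → Prop}
    (h : ∀ a b, R a b → S (f a) (f b))
    {α β : List X} (hm : WC.Move R α β) : WC.Move S (α.map f) (β.map f) := by
  obtain ⟨h1, h2, h3, h4, γ, δ, x, hc⟩ := hm
  refine ⟨wc_chain_map f h h1, wc_chain_map f h h2, ?_, ?_, γ.map f, δ.map f, f x, ?_⟩
  · simp [List.head?_map, h3]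
  · simp [List.getLast?_map, h4]
  · rcases hc with ⟨ha, hb⟩ | ⟨ha, hb⟩
    · exact Or.inl ⟨by simp [ha], by simp [hb]⟩
    · exact Or.inr ⟨by simp [ha], by simp [hb]⟩

theorem wc_homotopic_map (f : X → Y) {R : X → X → Prop} {S : Y → Y → Prop}
    (h : ∀ a b, R a b → S (f a) (f b))
    {α β : List X} (hm : WC.Homotopic R α β) :
    WC.Homotopic S (α.map f) (β.map f) :=
  Relation.ReflTransGen.lift (List.map f) (fun _ _ hab => wc_move_map f h hab) _ _ hm

end Aux

/-- The image of a weakly chained uniform space under a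
bi-uniformly continuous surjection is weakly chained. -/
theorem uWeaklyChained_of_biUniform_surjection {X Y : Type*}
    [UniformSpace X] [UniformSpace Y] (f : X → Y)
    (hX : UWeaklyChained X)
    (hcont : UniformContinuous f) (hsurj : Function.Surjective f)
    (himage : ∀ E : Set (X × X), Entourage X E → Entourage Y (Prod.map f f '' E)) :
    UWeaklyChained Y := by
  obtain ⟨hcc, hbasis⟩ := hX
  constructor
  · intro E' hE' x' y'
    obtain ⟨x, rfl⟩ := hsurj x'
    obtain ⟨y, rfl⟩ := hsurj y'
    have hE : Entourage X (Prod.map f f ⁻¹' E') :=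
      ⟨hcont hE'.1, fun p hp => hE'.2 _ hp⟩
    obtain ⟨α, hα, h1, h2⟩ := hcc _ hE x y
    refine ⟨α.map f, wc_chain_map f (fun a b hab => hab) hα, ?_, ?_⟩
    · simp [List.head?_map, h1]
    · simp [List.getLast?_map, h2]
  · intro G' hG'
    have hG : Prod.map f f ⁻¹' G' ∈ uniformity X := hcont hG'
    obtain ⟨E, hE, hEG, F, hF, hFE, hwf⟩ := hbasis _ hG
    refine ⟨Prod.map f f '' E, himage E hE, ?_, Prod.map f f '' F, himage F hF,
      Set.image_mono hFE, ?_⟩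
    · rintro p ⟨q, hq, rfl⟩; exact hEG hq
    · intro x' y' hxy D' hD'
      obtain ⟨⟨x, y⟩, hxyF, heq⟩ := hxy
      simp only [Prod.map, Prod.mk.injEq] at heq
      obtain ⟨rfl, rfl⟩ := heq
      have hD : Entourage X (Prod.map f f ⁻¹' D') :=
        ⟨hcont hD'.1, fun p hp => hD'.2 _ hp⟩
      obtain ⟨α, hα, ⟨h1, h2⟩, hhom⟩ := hwf x y hxyF _ hD
      refine ⟨α.map f, wc_chain_map f (fun a b hab => hab) hα, ⟨?_, ?_⟩, ?_⟩
      · simp [List.head?_map, h1]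
      · simp [List.getLast?_map, h2]
      · have := wc_homotopic_map f
          (fun a b hab => show URel (Prod.map f f '' E) (f a) (f b) from ⟨(a, b), hab, rfl⟩) hhom
        simpa [UHomotopic] using this
end

section
/- Homotopy lifting in inverse limits: With Λ, {X_r}, ψ_{rs}, X = lim← X_r and E_{r,ε} as in the inverse-system setup, suppose η = {γ₀, …, γ_k} is an ε-homotopy in X_r between ε-chains γ₀ and γ_k, and suppose γ̂₀ and γ̂ₖ are E_{r,ε}-chains in X that project pointwise under ψ_r to γ₀ and γ_k respectively and that have the same first point and the same last point. Then there is an E_{r,ε}-homotopy in X from γ̂₀ to γ̂ₖ. In particular, if λ is an ε-null ε-loop in X_r, then every E_{r,ε}-loop in X projecting pointwise under ψ_r to λ is E_{r,ε}-null. -/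
/-- The relation "distance less than `ε`" on a metric space. -/
def MRel {X : Type*} [MetricSpace X] (ε : ℝ) : X → X → Prop :=
  fun x y => dist x y < ε

/-- An `ε`-chain in a metric space. -/
def MChain {X : Type*} [MetricSpace X] (ε : ℝ) (α : List X) : Prop :=
  WC.IsChain (MRel ε) α

/-- `ε`-homotopy of chains in a metric space. -/
def MHomotopic {X : Type*} [MetricSpace X] (ε : ℝ) : List X → List X → Prop :=
  WC.Homotopic (MRel ε)

/-- A metric space is chain connected if any two points are joined by an
`ε`-chain for every `ε > 0`. -/
def ChainConnected (X : Type*) [MetricSpace X] : Prop :=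
  ∀ ε : ℝ, 0 < ε → ∀ x y : X, ∃ α : List X, MChain ε α ∧ WC.FromTo α x y

/-- A metric space is weakly chained if it is chain connected and for every
`ε > 0` there is `δ > 0` such that any two points at distance `< δ` are joined
by arbitrarily fine chains that are `ε`-homotopic to the two-point chain formed
by those points. -/
def WeaklyChained (X : Type*) [MetricSpace X] : Prop :=
  ChainConnected X ∧
    ∀ ε : ℝ, 0 < ε → ∃ δ : ℝ, 0 < δ ∧ ∀ x y : X, dist x y < δ →
      ∀ κ : ℝ, 0 < κ → ∃ α : List X, MChain κ α ∧ WC.FromTo α x y ∧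
        MHomotopic ε α [x, y]

/-- The inverse limit of the system `{X_r, ψ_{rs}}`: threads in the product. -/
abbrev InvLim (Λ : Set ℝ) (X : Λ → Type*)
    (ψ : ∀ r s : Λ, (r : ℝ) ≤ (s : ℝ) → X s → X r) : Type _ :=
  {x : ∀ r : Λ, X r // ∀ (r s : Λ) (h : (r : ℝ) ≤ (s : ℝ)), ψ r s h (x s) = x r}

/-- The relation on the inverse limit given by the entourage
`E_{r,ε} = {(x̂,ŷ) : d(x_r, y_r) < ε}`. -/
def ERel (Λ : Set ℝ) (X : Λ → Type*) [∀ r, MetricSpace (X r)]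
    (ψ : ∀ r s : Λ, (r : ℝ) ≤ (s : ℝ) → X s → X r) (r : Λ) (ε : ℝ) :
    InvLim Λ X ψ → InvLim Λ X ψ → Prop :=
  fun a b => dist (a.1 r) (b.1 r) < ε

namespace WCAux
open WC List

variable {Y : Type*} {S : Y → Y → Prop}

lemma getLast?_cons_ne {a : Y} {l : List Y} (hl : l ≠ []) :
    (a :: l).getLast? = l.getLast? := by
  cases l with
  | nil => exact absurd rfl hl
  | cons b t => exact List.getLast?_cons_cons

lemma move_symm {α β : List Y} (h : Move S α β) : Move S β α := by
  obtain ⟨h1, h2, h3, h4, γ, δ, x, h5⟩ := h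
  exact ⟨h2, h1, h3.symm, h4.symm, γ, δ, x, h5.symm⟩

lemma move_ne_nil {α β : List Y} (h : Move S α β) : α ≠ [] ∧ β ≠ [] := by
  obtain ⟨_, _, h3, _, γ, δ, x, h5⟩ := h
  rcases h5 with ⟨h5, h6⟩ | ⟨h5, h6⟩
  · have hβ : β ≠ [] := by simp [h6]
    refine ⟨fun e => hβ ?_, hβ⟩
    rw [e] at h3
    exact List.head?_eq_none_iff.mp h3.symm
  · have hα : α ≠ [] := by simp [h6]
    refine ⟨hα, fun e => hα ?_⟩
    rw [e] at h3
    exact List.head?_eq_none_iff.mp h3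

lemma homotopic_head? {α β : List Y} (h : Homotopic S α β) : α.head? = β.head? := by
  induction h with
  | refl => rfl
  | tail _ hm ih => exact ih.trans hm.2.2.1

lemma homotopic_getLast? {α β : List Y} (h : Homotopic S α β) :
    α.getLast? = β.getLast? := by
  induction h with
  | refl => rfl
  | tail _ hm ih => exact ih.trans hm.2.2.2.1

lemma move_cons {a h : Y} {α β : List Y} (hm : Move S α β) (hah : S a h)
    (hhd : α.head? = some h) : Move S (a :: α) (a :: β) := by
  obtain ⟨hcα, hcβ, hh, hl, γ, δ, x, hdec⟩ := hm
  have hβh : β.head? = some h := hh ▸ hhd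
  have hαne : α ≠ [] := by intro e; rw [e] at hhd; simp at hhd
  have hβne : β ≠ [] := by intro e; rw [e] at hβh; simp at hβh
  refine ⟨?_, ?_, ?_, ?_, a :: γ, δ, x, ?_⟩
  · exact List.isChain_cons.mpr ⟨fun y hy => by rw [hhd] at hy; cases hy; exact hah, hcα⟩
  · refine List.isChain_cons.mpr ⟨fun y hy => by rw [hβh] at hy; cases hy; exact hah, hcβ⟩
  · simp
  · rw [getLast?_cons_ne hαne, getLast?_cons_ne hβne]; exact hl
  · rcases hdec with ⟨h5, h6⟩ | ⟨h5, h6⟩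
    · exact Or.inl ⟨by rw [h5]; rfl, by rw [h6]; rfl⟩
    · exact Or.inr ⟨by rw [h5]; rfl, by rw [h6]; rfl⟩

lemma homotopic_cons {a : Y} {α β : List Y} (hch : WC.IsChain S (a :: α))
    (h : Homotopic S α β) : Homotopic S (a :: α) (a :: β) := by
  induction h with
  | refl => exact .refl
  | @tail μ ν hαμ hm ih =>
    have hμne : μ ≠ [] := (move_ne_nil hm).1
    obtain ⟨b, t, rfl⟩ := List.exists_cons_of_ne_nil hμne
    have hhd : α.head? = some b := (homotopic_head? hαμ).trans rfl
    have hab : S a b := by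
      rcases List.isChain_cons.mp hch with ⟨h1, _⟩
      exact h1 b (by rw [hhd]; rfl)
    exact ih.tail (move_cons hm hab rfl)

variable {B : Type*} {π : Y → B} {R : B → B → Prop}

lemma chain_pull (hS : ∀ a b, S a b ↔ R (π a) (π b)) {g : List Y} :
    WC.IsChain S g ↔ List.Chain' R (g.map π) := by
  rw [WC.IsChain]; unfold List.Chain'; rw [List.isChain_map]
  exact ⟨fun h => h.imp fun a b => (hS a b).mp, fun h => h.imp fun a b => (hS a b).mpr⟩

lemma interleave (hS : ∀ a b, S a b ↔ R (π a) (π b)) (hrefl : ∀ b : B, R b b) :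
    ∀ (u v : List Y) (a : Y), WC.IsChain S (a :: u) → WC.IsChain S (a :: v) →
      u.map π = v.map π → (a :: u).getLast? = (a :: v).getLast? →
      Homotopic S (a :: u) (a :: v)
  | [], v, a, _, _, hmap, _ => by
    have hv : v = [] := by simpa using hmap.symm
    subst hv; exact .refl
  | b :: u', v, a, hcu, hcv, hmap, hlast => by
    obtain ⟨c, v', rfl, hbc, hmap'⟩ :
        ∃ c v', v = c :: v' ∧ π b = π c ∧ u'.map π = v'.map π := by
      cases v with
      | nil => simp at hmap
      | cons c v' =>
        simp only [List.map_cons, List.cons.injEq] at hmap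
        exact ⟨c, v', rfl, hmap.1, hmap.2⟩
    cases u' with
    | nil =>
      have hv' : v' = [] := by simpa using hmap'.symm
      subst hv'
      obtain rfl : b = c := by simpa using hlast
      exact .refl
    | cons e u'' =>
      obtain ⟨e', v'', rfl⟩ : ∃ e' v'', v' = e' :: v'' := by
        cases v' with
        | nil => simp at hmap'
        | cons e' v'' => exact ⟨e', v'', rfl⟩
      -- facts from chains
      have hab : S a b := (List.isChain_cons_cons.mp hcu).1
      have hbu : WC.IsChain S (b :: e :: u'') := (List.isChain_cons_cons.mp hcu).2
      have hbe : S b e := (List.isChain_cons_cons.mp hbu).1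
      have hac : S a c := (List.isChain_cons_cons.mp hcv).1
      have hcv' : WC.IsChain S (c :: e' :: v'') := (List.isChain_cons_cons.mp hcv).2
      have hScb : S c b := by
        rw [hS, ← hbc]; exact hrefl _
      have hSce : S c e := by
        rw [hS, ← hbc]; exact (hS b e).mp hbe
      have hceu : WC.IsChain S (c :: e :: u'') :=
        List.isChain_cons_cons.mpr ⟨hSce, (List.isChain_cons_cons.mp hbu).2⟩
      have m1 : Move S (a :: b :: e :: u'') (a :: c :: b :: e :: u'') := by
        refine ⟨hcu, ?_, rfl, ?_, [a], b :: e :: u'', c, Or.inl ⟨rfl, rfl⟩⟩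
        · exact List.isChain_cons_cons.mpr ⟨hac, List.isChain_cons_cons.mpr ⟨hScb, hbu⟩⟩
        · simp [List.getLast?_cons_cons]
      have m2 : Move S (a :: c :: b :: e :: u'') (a :: c :: e :: u'') := by
        refine ⟨m1.2.1, ?_, rfl, ?_, [a, c], e :: u'', b, Or.inr ⟨rfl, rfl⟩⟩
        · exact List.isChain_cons_cons.mpr ⟨hac, hceu⟩
        · simp [List.getLast?_cons_cons]
      have hlast' : (c :: e :: u'').getLast? = (c :: e' :: v'').getLast? := by
        simpa [List.getLast?_cons_cons] using hlast
      have ih := interleave hS hrefl (e :: u'') (e' :: v'') c hceu hcv' hmap' hlast'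
      have step3 : Homotopic S (a :: c :: e :: u'') (a :: c :: e' :: v'') :=
        homotopic_cons (List.isChain_cons_cons.mpr ⟨hac, hceu⟩) ih
      exact ((Relation.ReflTransGen.single m1).tail m2).trans step3

lemma pad {α : List Y} {a z : Y} (hrefl : ∀ y : Y, S y y) (hc : WC.IsChain S α)
    (hh : α.head? = some a) (hl : α.getLast? = some z) :
    Homotopic S α (a :: α ++ [z]) ∧ WC.IsChain S (a :: α ++ [z]) := by
  have hαne : α ≠ [] := by intro e; rw [e] at hh; simp at hh
  have m1 : Move S α (a :: α) := by
    refine ⟨hc, ?_, ?_, (getLast?_cons_ne hαne).symm, [], α, a, Or.inl ⟨rfl, rfl⟩⟩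
    · exact List.isChain_cons.mpr ⟨fun y hy => by rw [hh] at hy; cases hy; exact hrefl a, hc⟩
    · rw [hh]; rfl
  have hcc : WC.IsChain S ((a :: α) ++ [z]) := by
    refine List.isChain_append.mpr ⟨m1.2.1, List.isChain_singleton z, fun x hx y hy => ?_⟩
    rw [getLast?_cons_ne hαne, hl] at hx
    cases hx; cases hy; exact hrefl z
  have m2 : Move S (a :: α) ((a :: α) ++ [z]) := by
    refine ⟨m1.2.1, hcc, ?_, ?_, a :: α, [], z, Or.inl ⟨by simp, rfl⟩⟩
    · simp
    · rw [List.getLast?_concat, getLast?_cons_ne hαne, hl]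
  exact ⟨(Relation.ReflTransGen.single m1).tail m2, by simpa using hcc⟩

lemma pad_chain {h l : B} {γ γ' : List B} (hγ' : γ' ≠ [])
    (hc : List.Chain' R (h :: γ ++ [l])) (hc' : List.Chain' R γ')
    (hh : γ.head? = γ'.head?) (hl : γ.getLast? = γ'.getLast?) :
    List.Chain' R (h :: γ' ++ [l]) := by
  have hγne : γ ≠ [] := by
    intro e; rw [e] at hh
    exact hγ' (List.head?_eq_none_iff.mp hh.symm)
  obtain ⟨b, t, rfl⟩ := List.exists_cons_of_ne_nil hγne
  obtain ⟨b', t', rfl⟩ := List.exists_cons_of_ne_nil hγ'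
  obtain rfl : b = b' := by simpa using hh
  rcases List.isChain_cons.mp hc with ⟨hhb, hc1⟩
  have hRhb : R h b := hhb b (by simp)
  rcases List.isChain_append.mp hc1 with ⟨_, _, hlink⟩
  refine List.isChain_cons.mpr ⟨fun y hy => ?_, ?_⟩
  · simp at hy
    cases hy; exact hRhb
  · refine List.isChain_append.mpr ⟨hc', List.isChain_singleton l, fun x hx y hy => ?_⟩
    rw [← hl] at hx
    exact hlink x hx y hy

lemma move_lift (hS : ∀ a b, S a b ↔ R (π a) (π b)) (hsurj : Function.Surjective π)
    {γ γ' : List B} (hm : Move R γ γ') {h l : B} {g : List Y}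
    (hmap : g.map π = h :: γ ++ [l]) (hg : WC.IsChain S g) :
    ∃ g', Move S g g' ∧ g'.map π = h :: γ' ++ [l] := by
  classical
  obtain ⟨hcγ, hcγ', hhd, hlast, c, d, x, hdec⟩ := hm
  have hgR : List.Chain' R (g.map π) := (chain_pull hS).mp hg
  rcases hdec with ⟨h5, h6⟩ | ⟨h5, h6⟩
  · -- insert: γ = c ++ d, γ' = c ++ x :: d
    subst h5 h6
    have hγ'ne : (c ++ x :: d) ≠ [] := by simp
    have hsplit : g.map π = (h :: c) ++ (d ++ [l]) := by rw [hmap]; simp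
    obtain ⟨u, w, rfl, hu, hw⟩ := List.map_eq_append_iff.mp hsplit
    obtain ⟨xh, hxh⟩ := hsurj x
    have hune : u ≠ [] := by intro e; rw [e] at hu; simp at hu
    have hwne : w ≠ [] := by intro e; rw [e] at hw; simp at hw
    obtain ⟨a, u₂, rfl⟩ := List.exists_cons_of_ne_nil hune
    refine ⟨(a :: u₂) ++ xh :: w, ⟨hg, ?_, ?_, ?_, a :: u₂, w, xh, Or.inl ⟨rfl, rfl⟩⟩, ?_⟩
    · refine (chain_pull hS).mpr ?_
      have : ((a :: u₂) ++ xh :: w).map π = h :: (c ++ x :: d) ++ [l] := by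
        simp only [List.map_append, List.map_cons, hu, hw, hxh]
        simp
      rw [this]
      exact pad_chain hγ'ne (hmap ▸ hgR) hcγ' hhd hlast
    · simp
    · rw [List.getLast?_append, List.getLast?_append, getLast?_cons_ne hwne]
    · simp only [List.map_append, List.map_cons, hu, hw, hxh]
      simp
  · -- remove: γ' = c ++ d, γ = c ++ x :: d
    subst h5 h6
    have hγ'ne : (c ++ d) ≠ [] := by
      intro e
      rw [e] at hhd
      have : (c ++ x :: d) = [] := List.head?_eq_none_iff.mp (by rw [hhd]; rfl)
      simp at this
    have hsplit : g.map π = (h :: c) ++ (x :: (d ++ [l])) := by rw [hmap]; simp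
    obtain ⟨u, w₀, rfl, hu, hw₀⟩ := List.map_eq_append_iff.mp hsplit
    obtain ⟨xh, w, rfl, hxh, hw⟩ := List.map_eq_cons_iff.mp hw₀
    have hune : u ≠ [] := by intro e; rw [e] at hu; simp at hu
    have hwne : w ≠ [] := by intro e; rw [e] at hw; simp at hw
    obtain ⟨a, u₂, rfl⟩ := List.exists_cons_of_ne_nil hune
    refine ⟨(a :: u₂) ++ w, ⟨hg, ?_, ?_, ?_, a :: u₂, w, xh, Or.inr ⟨rfl, rfl⟩⟩, ?_⟩
    · refine (chain_pull hS).mpr ?_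
      have : ((a :: u₂) ++ w).map π = h :: (c ++ d) ++ [l] := by
        simp only [List.map_append, List.map_cons, hu, hw]
        simp
      rw [this]
      exact pad_chain hγ'ne (hmap ▸ hgR) hcγ' hhd hlast
    · simp
    · rw [List.getLast?_append, List.getLast?_append, getLast?_cons_ne hwne]
    · simp only [List.map_append, List.map_cons, hu, hw]
      simp

lemma homotopy_lift (hS : ∀ a b, S a b ↔ R (π a) (π b)) (hsurj : Function.Surjective π)
    {γ₀ γk : List B} (hh : Homotopic R γ₀ γk) {h l : B} :
    ∀ g : List Y, WC.IsChain S g → g.map π = h :: γ₀ ++ [l] →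
      ∃ g', Homotopic S g g' ∧ WC.IsChain S g' ∧ g'.map π = h :: γk ++ [l] ∧
        g'.head? = g.head? ∧ g'.getLast? = g.getLast? := by
  induction hh with
  | refl => exact fun g hg hm => ⟨g, .refl, hg, hm, rfl, rfl⟩
  | tail _ hmove ih =>
    intro g hg hm
    obtain ⟨g', hhom, hchain', hmap', hhd, hlst⟩ := ih g hg hm
    obtain ⟨g'', hmv, hmap''⟩ := move_lift hS hsurj hmove hmap' hchain'
    exact ⟨g'', hhom.tail hmv, hmv.2.1, hmap'', hmv.2.2.1.symm.trans hhd,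
      hmv.2.2.2.1.symm.trans hlst⟩

theorem lift_abstract (hS : ∀ a b, S a b ↔ R (π a) (π b)) (hrefl : ∀ b : B, R b b)
    (hsurj : Function.Surjective π)
    {γ₀ γk : List B} (hhom : Homotopic R γ₀ γk)
    {g₀ gk : List Y} (hg₀ : WC.IsChain S g₀) (hgk : WC.IsChain S gk)
    (hm₀ : g₀.map π = γ₀) (hmk : gk.map π = γk)
    (hh : g₀.head? = gk.head?) (hl : g₀.getLast? = gk.getLast?) :
    Homotopic S g₀ gk := by
  have hSrefl : ∀ a : Y, S a a := fun a => (hS a a).mpr (hrefl _)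
  cases g₀ with
  | nil =>
    have : gk = [] := List.head?_eq_none_iff.mp hh.symm
    subst this; exact .refl
  | cons a t =>
    obtain ⟨zz, hzz⟩ : ∃ z, (a :: t).getLast? = some z :=
      ⟨(a :: t).getLast (by simp), List.getLast?_eq_getLast (l := a :: t) (by simp)⟩
    have hpad₀ := pad hSrefl hg₀ (by rfl) hzz
    have hmap₀ : (a :: (a :: t) ++ [zz]).map π = π a :: γ₀ ++ [π zz] := by
      simp [← hm₀]
    obtain ⟨g', hhomg', hcg', hmapg', hhdg', hlstg'⟩ :=
      homotopy_lift hS hsurj hhom _ hpad₀.2 hmap₀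
    -- endpoints of g'
    have hhdg'2 : g'.head? = some a := hhdg'.trans rfl
    have hlstg'2 : g'.getLast? = some zz := by
      rw [hlstg']
      show (a :: (a :: t) ++ [zz]).getLast? = some zz
      rw [show a :: (a :: t) ++ [zz] = (a :: a :: t) ++ [zz] by simp,
        List.getLast?_concat]
    -- pad gk
    have hhk : gk.head? = some a := hh.symm.trans rfl
    have hlk : gk.getLast? = some zz := hl.symm.trans hzz
    have hpadk := pad hSrefl hgk hhk hlk
    have hmapk : (a :: gk ++ [zz]).map π = π a :: γk ++ [π zz] := by
      simp [← hmk]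
    -- interleave g' with a :: gk ++ [zz]
    obtain ⟨a', u, rfl⟩ := List.exists_cons_of_ne_nil
      (fun e => by rw [e] at hhdg'2; simp at hhdg'2 : g' ≠ [])
    have haa : a = a' := by symm; simpa using hhdg'2
    subst haa
    have hmapu : u.map π = (gk ++ [zz]).map π := by
      have h1 : π a :: u.map π = π a :: (γk ++ [π zz]) := by
        rw [← List.map_cons]; exact hmapg'
      injection h1 with _ h2
      rw [h2]
      simp [hmk]
    have hlasteq : (a :: u).getLast? = (a :: (gk ++ [zz])).getLast? := by
      rw [hlstg'2]
      have : gk ++ [zz] ≠ [] := by simp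
      rw [getLast?_cons_ne this, List.getLast?_concat]
    have hinter : Homotopic S (a :: u) (a :: (gk ++ [zz])) :=
      interleave hS hrefl u (gk ++ [zz]) a hcg' (by simpa using hpadk.2) hmapu hlasteq
    have hsym : Symmetric (Move S) := fun _ _ => move_symm
    exact ((hpad₀.1.trans hhomg').trans hinter).trans
      ((@Relation.ReflTransGen.stdSymm _ (Move S) ⟨hsym⟩).symm _ _ hpadk.1)

end WCAux

theorem invLim_proj_surjective (Λ : Set ℝ)
    (hunb : ∀ M : ℝ, ∃ r ∈ Λ, M < r)
    (X : Λ → Type*)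
    (ψ : ∀ r s : Λ, (r : ℝ) ≤ (s : ℝ) → X s → X r)
    (hsurj : ∀ (r s : Λ) (h : (r : ℝ) ≤ (s : ℝ)), Function.Surjective (ψ r s h))
    (hid : ∀ (r : Λ) (h : (r : ℝ) ≤ (r : ℝ)) (x : X r), ψ r r h x = x)
    (hcomp : ∀ (r s t : Λ) (hrs : (r : ℝ) ≤ (s : ℝ)) (hst : (s : ℝ) ≤ (t : ℝ))
      (x : X t), ψ r s hrs (ψ s t hst x) = ψ r t (hrs.trans hst) x)
    (r : Λ) : Function.Surjective (fun a : InvLim Λ X ψ => a.1 r) := by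
  intro x
  classical
  have hstep : ∀ (p : Σ' s : Λ, X s) (n : ℕ),
      ∃ q : Σ' s : Λ, X s, ((p.1 : ℝ) ≤ (q.1 : ℝ) ∧ (n : ℝ) < (q.1 : ℝ)) ∧
        ∀ h : (p.1 : ℝ) ≤ (q.1 : ℝ), ψ p.1 q.1 h q.2 = p.2 := by
    intro p n
    obtain ⟨s, hsΛ, hs⟩ := hunb (max (p.1 : ℝ) n)
    have h1 : (p.1 : ℝ) ≤ s := le_of_lt (lt_of_le_of_lt (le_max_left _ _) hs)
    obtain ⟨q, hq⟩ := hsurj p.1 ⟨s, hsΛ⟩ h1 p.2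
    exact ⟨⟨⟨s, hsΛ⟩, q⟩, ⟨h1, lt_of_le_of_lt (le_max_right _ _) hs⟩, fun h => hq⟩
  choose step hstep1 hstep2 using hstep
  let F : ℕ → Σ' s : Λ, X s := fun n => Nat.rec ⟨r, x⟩ (fun n p => step p n) n
  have hmono1 : ∀ n, ((F n).1 : ℝ) ≤ ((F (n+1)).1 : ℝ) := fun n => (hstep1 (F n) n).1
  have hmono : ∀ m n, m ≤ n → ((F m).1 : ℝ) ≤ ((F n).1 : ℝ) := by
    intro m n hmn
    induction n, hmn using Nat.le_induction with
    | base => exact le_refl _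
    | succ n hmn ih => exact ih.trans (hmono1 n)
  have hcof : ∀ s : Λ, ∃ n, (s : ℝ) ≤ ((F n).1 : ℝ) := by
    intro s
    obtain ⟨n, hn⟩ := exists_nat_ge (s : ℝ)
    exact ⟨n + 1, hn.trans (le_of_lt (hstep1 (F n) n).2)⟩
  have hcoh : ∀ (s : Λ) (m n : ℕ), m ≤ n → ∀ (h : (s : ℝ) ≤ ((F m).1 : ℝ))
      (h' : (s : ℝ) ≤ ((F n).1 : ℝ)),
      ψ s (F m).1 h (F m).2 = ψ s (F n).1 h' (F n).2 := by
    intro s m n hmn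
    induction n, hmn using Nat.le_induction with
    | base => intro h h'; rfl
    | succ n hmn ih =>
      intro h h'
      have h2 : (s : ℝ) ≤ ((F n).1 : ℝ) := h.trans (hmono m n hmn)
      rw [ih h h2, ← hstep2 (F n) n (hmono1 n),
        hcomp s (F n).1 (F (n+1)).1 h2 (hmono1 n) ((F (n+1)).2)]
  let N : Λ → ℕ := fun s => (hcof s).choose
  have hN : ∀ s : Λ, (s : ℝ) ≤ ((F (N s)).1 : ℝ) := fun s => (hcof s).choose_spec
  refine ⟨⟨fun s => ψ s (F (N s)).1 (hN s) (F (N s)).2, ?_⟩, ?_⟩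
  · intro s t hst
    have hsN : (s : ℝ) ≤ ((F (max (N s) (N t))).1 : ℝ) :=
      (hN s).trans (hmono _ _ (le_max_left _ _))
    have htN : (t : ℝ) ≤ ((F (max (N s) (N t))).1 : ℝ) :=
      (hN t).trans (hmono _ _ (le_max_right _ _))
    show ψ s t hst (ψ t (F (N t)).1 (hN t) (F (N t)).2) = _
    rw [hcoh t (N t) (max (N s) (N t)) (le_max_right _ _) (hN t) htN,
      hcomp s t (F (max (N s) (N t))).1 hst htN]
    exact (hcoh s (N s) (max (N s) (N t)) (le_max_left _ _) (hN s) hsN).symm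
  · show ψ r (F (N r)).1 (hN r) (F (N r)).2 = x
    have h0 : (r : ℝ) ≤ ((F 0).1 : ℝ) := le_refl _
    rw [← hcoh r 0 (N r) (Nat.zero_le _) h0 (hN r)]
    exact hid r h0 x

/-- **Homotopy lifting in inverse limits.** If `γ₀` and `γ_k`
are `ε`-homotopic `ε`-chains in `X_r` and `γ̂₀`, `γ̂ₖ` are `E_{r,ε}`-chains in
the inverse limit projecting pointwise to `γ₀`, `γ_k` and having the same first
and last points, then `γ̂₀` and `γ̂ₖ` are `E_{r,ε}`-homotopic. In particular,
every `E_{r,ε}`-loop projecting pointwise to an `ε`-null `ε`-loop of `X_r` is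
`E_{r,ε}`-null. -/
theorem invLim_homotopy_lifting (Λ : Set ℝ)
    (hpos : ∀ r ∈ Λ, (0 : ℝ) < r) (hunb : ∀ M : ℝ, ∃ r ∈ Λ, M < r)
    (X : Λ → Type*) [∀ r, MetricSpace (X r)]
    (ψ : ∀ r s : Λ, (r : ℝ) ≤ (s : ℝ) → X s → X r)
    (hsurj : ∀ (r s : Λ) (h : (r : ℝ) ≤ (s : ℝ)), Function.Surjective (ψ r s h))
    (hlip : ∀ (r s : Λ) (h : (r : ℝ) ≤ (s : ℝ)), LipschitzWith 1 (ψ r s h))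
    (hid : ∀ (r : Λ) (h : (r : ℝ) ≤ (r : ℝ)) (x : X r), ψ r r h x = x)
    (hcomp : ∀ (r s t : Λ) (hrs : (r : ℝ) ≤ (s : ℝ)) (hst : (s : ℝ) ≤ (t : ℝ))
      (x : X t), ψ r s hrs (ψ s t hst x) = ψ r t (hrs.trans hst) x)
    (r : Λ) (ε : ℝ) (hε : 0 < ε) :
    (∀ γ₀ γk : List (X r), MChain ε γ₀ → MChain ε γk → MHomotopic ε γ₀ γk →
      ∀ g₀ gk : List (InvLim Λ X ψ),
        WC.IsChain (ERel Λ X ψ r ε) g₀ → WC.IsChain (ERel Λ X ψ r ε) gk →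
        g₀.map (fun a => a.1 r) = γ₀ → gk.map (fun a => a.1 r) = γk →
        g₀.head? = gk.head? → g₀.getLast? = gk.getLast? →
        WC.Homotopic (ERel Λ X ψ r ε) g₀ gk) ∧
    (∀ (lam : List (X r)) (z : X r), MChain ε lam → WC.FromTo lam z z →
      MHomotopic ε lam [z] →
      ∀ lhat : List (InvLim Λ X ψ), WC.IsChain (ERel Λ X ψ r ε) lhat →
        lhat.map (fun a => a.1 r) = lam →
        ∀ zhat : InvLim Λ X ψ, lhat.head? = some zhat →
          lhat.getLast? = some zhat →
          WC.Homotopic (ERel Λ X ψ r ε) lhat [zhat]) := by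
  have hpisurj : Function.Surjective (fun a : InvLim Λ X ψ => a.1 r) :=
    invLim_proj_surjective Λ hunb X ψ hsurj hid hcomp r
  have hS : ∀ a b : InvLim Λ X ψ, ERel Λ X ψ r ε a b ↔
      MRel ε ((fun a : InvLim Λ X ψ => a.1 r) a) ((fun a : InvLim Λ X ψ => a.1 r) b) :=
    fun a b => Iff.rfl
  have hrefl : ∀ b : X r, MRel ε b b := fun b => by simpa [MRel] using hε
  have key : ∀ γ₀ γk : List (X r), MChain ε γ₀ → MChain ε γk → MHomotopic ε γ₀ γk →
      ∀ g₀ gk : List (InvLim Λ X ψ),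
        WC.IsChain (ERel Λ X ψ r ε) g₀ → WC.IsChain (ERel Λ X ψ r ε) gk →
        g₀.map (fun a => a.1 r) = γ₀ → gk.map (fun a => a.1 r) = γk →
        g₀.head? = gk.head? → g₀.getLast? = gk.getLast? →
        WC.Homotopic (ERel Λ X ψ r ε) g₀ gk := by
    intro γ₀ γk h0 hk hhom g₀ gk hc0 hck hm0 hmk hhd hlst
    exact WCAux.lift_abstract hS hrefl hpisurj hhom hc0 hck hm0 hmk hhd hlst
  refine ⟨key, ?_⟩
  intro lam z hlam hft hnull lhat hlc hlm zhat hhd hlst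
  have hz : zhat.1 r = z := by
    have h1 := congrArg List.head? hlm
    rw [List.head?_map, hhd, hft.1] at h1
    simpa using h1
  refine key lam [z] hlam (List.isChain_singleton z) hnull lhat [zhat] hlc
    (List.isChain_singleton zhat) hlm (by simp [hz]) (by rw [hhd]; rfl) (by rw [hlst]; rfl)
end

section
/- Let f : X → Y be a uniformly continuous surjection between metric spaces and let 0 < δ < ε. Then f is (ε,δ)-refining if and only if for every δ-chain β in Y from a to b, every a' ∈ f⁻¹(a), every b' ∈ f⁻¹(b), and every κ > 0, there is a κ-chain α in X from a' to b' with [f(α)]_ε = [β]_ε. -/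
namespace WC

variable {Y : Type*} {R : Y → Y → Prop}

lemma Move.symm {α β : List Y} (h : Move R α β) : Move R β α := by
  obtain ⟨h1, h2, h3, h4, γ, d, x, hc⟩ := h
  exact ⟨h2, h1, h3.symm, h4.symm, γ, d, x, hc.symm⟩

lemma Homotopic.symm {α β : List Y} (h : Homotopic R α β) : Homotopic R β α := by
  induction h with
  | refl => exact Relation.ReflTransGen.refl
  | tail _ hbc ih => exact Relation.ReflTransGen.head hbc.symm ih

lemma Homotopic.head_eq {α β : List Y} (h : Homotopic R α β) : α.head? = β.head? := by
  induction h with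
  | refl => rfl
  | tail _ hbc ih => exact ih.trans hbc.2.2.1

lemma Homotopic.getLast_eq {α β : List Y} (h : Homotopic R α β) :
    α.getLast? = β.getLast? := by
  induction h with
  | refl => rfl
  | tail _ hbc ih => exact ih.trans hbc.2.2.2.1

lemma Homotopic.chain {α β : List Y} (h : Homotopic R α β) (hα : IsChain R α) :
    IsChain R β := by
  induction h with
  | refl => exact hα
  | tail _ hbc _ => exact hbc.2.1

lemma Move.ne_nil_left {α β : List Y} (h : Move R α β) : α ≠ [] := by
  obtain ⟨_, _, h3, _, γ, d, x, hc⟩ := h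
  rcases hc with ⟨hα, hβ⟩ | ⟨hβ, hα⟩
  · intro hn
    rw [hn, hβ] at h3
    cases γ <;> simp at h3
  · intro hn; rw [hα] at hn; cases γ <;> simp at hn

lemma Move.ne_nil_right {α β : List Y} (h : Move R α β) : β ≠ [] :=
  h.symm.ne_nil_left

lemma Move.append_left {q q' : List Y} (s : List Y) (h : Move R q q')
    (h1 : IsChain R (s ++ q)) (h2 : IsChain R (s ++ q')) :
    Move R (s ++ q) (s ++ q') := by
  obtain ⟨hq, hq', hh, hl, γ, d, x, hc⟩ := h
  refine ⟨h1, h2, ?_, ?_, s ++ γ, d, x, ?_⟩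
  · cases s with
    | nil => simpa using hh
    | cons a s' => simp
  · rw [List.getLast?_append_of_ne_nil s (Move.ne_nil_left ⟨hq, hq', hh, hl, γ, d, x, hc⟩),
      List.getLast?_append_of_ne_nil s (Move.ne_nil_right ⟨hq, hq', hh, hl, γ, d, x, hc⟩)]
    exact hl
  · rcases hc with ⟨e1, e2⟩ | ⟨e1, e2⟩
    · exact Or.inl ⟨by rw [e1, List.append_assoc], by rw [e2, List.append_assoc]⟩
    · exact Or.inr ⟨by rw [e1, List.append_assoc], by rw [e2, List.append_assoc]⟩

lemma Move.append_right {p p' : List Y} (t : List Y) (h : Move R p p')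
    (h1 : IsChain R (p ++ t)) (h2 : IsChain R (p' ++ t)) :
    Move R (p ++ t) (p' ++ t) := by
  obtain ⟨hp, hp', hh, hl, γ, d, x, hc⟩ := h
  have hm : Move R p p' := ⟨hp, hp', hh, hl, γ, d, x, hc⟩
  refine ⟨h1, h2, ?_, ?_, γ, d ++ t, x, ?_⟩
  · rw [List.head?_append_of_ne_nil _ hm.ne_nil_left,
      List.head?_append_of_ne_nil _ hm.ne_nil_right]
    exact hh
  · cases t with
    | nil => simpa using hl
    | cons a t' =>
      rw [List.getLast?_append_of_ne_nil p (by simp),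
        List.getLast?_append_of_ne_nil p' (by simp)]
  · rcases hc with ⟨e1, e2⟩ | ⟨e1, e2⟩
    · exact Or.inl ⟨by rw [e1, List.append_assoc], by rw [e2]; simp⟩
    · exact Or.inr ⟨by rw [e1, List.append_assoc], by rw [e2]; simp⟩

lemma Homotopic.append_left {q q' : List Y} (s : List Y) (hs : IsChain R s)
    (h : Homotopic R q q') (hq : IsChain R q)
    (hlink : ∀ a ∈ s.getLast?, ∀ b ∈ q.head?, R a b) :
    Homotopic R (s ++ q) (s ++ q') := by
  induction h with
  | refl => exact Relation.ReflTransGen.refl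
  | @tail b c hqb hbc ih =>
    have hcb : IsChain R b := hbc.1
    have hcc : IsChain R c := hbc.2.1
    have hhb : q.head? = b.head? := Homotopic.head_eq hqb
    have hhc : q.head? = c.head? := hhb.trans hbc.2.2.1
    exact ih.tail (hbc.append_left s
      (hs.append hcb (by rw [← hhb]; exact hlink))
      (hs.append hcc (by rw [← hhc]; exact hlink)))

lemma Homotopic.append_right {p p' : List Y} (t : List Y) (ht : IsChain R t)
    (h : Homotopic R p p') (hp : IsChain R p)
    (hlink : ∀ a ∈ p.getLast?, ∀ b ∈ t.head?, R a b) :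
    Homotopic R (p ++ t) (p' ++ t) := by
  induction h with
  | refl => exact Relation.ReflTransGen.refl
  | @tail b c hpb hbc ih =>
    have hlb : p.getLast? = b.getLast? := Homotopic.getLast_eq hpb
    have hlc : p.getLast? = c.getLast? := hlb.trans hbc.2.2.2.1
    exact ih.tail (hbc.append_right t
      (hbc.1.append ht (by rw [← hlb]; exact hlink))
      (hbc.2.1.append ht (by rw [← hlc]; exact hlink)))

/-- Gluing chains with a common point. -/
lemma isChain_glue {p q : List Y} {m : Y} (hp : IsChain R p) (hq : IsChain R q)
    (hlp : p.getLast? = some m) (hhq : q.head? = some m) :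
    IsChain R (p ++ q.tail) := by
  obtain ⟨qt, rfl⟩ : ∃ qt, q = m :: qt := by
    cases q with
    | nil => simp at hhq
    | cons a q' => exact ⟨q', by rw [show a = m by simpa using hhq]⟩
  refine hp.append (hq.tail) ?_
  intro a ha b hb
  rw [hlp] at ha
  obtain rfl : m = a := by simpa using ha
  exact (List.isChain_cons.mp hq).1 b hb

lemma homotopic_glue {p p' q q' : List Y} {m : Y}
    (hp : Homotopic R p p') (hq : Homotopic R q q')
    (hcp : IsChain R p) (hcq : IsChain R q)
    (hlp : p.getLast? = some m) (hhq : q.head? = some m) :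
    Homotopic R (p ++ q.tail) (p' ++ q'.tail) := by
  obtain ⟨qt, rfl⟩ : ∃ qt, q = m :: qt := by
    cases q with
    | nil => simp at hhq
    | cons a q' => exact ⟨q', by rw [show a = m by simpa using hhq]⟩
  -- step 1
  have hlink1 : ∀ a ∈ p.getLast?, ∀ b ∈ qt.head?, R a b := by
    intro a ha b hb
    rw [hlp] at ha
    obtain rfl : m = a := by simpa using ha
    exact (List.isChain_cons.mp hcq).1 b hb
  have step1 : Homotopic R (p ++ qt) (p' ++ qt) :=
    hp.append_right qt hcq.tail hcp hlink1
  -- step 2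
  have hcp' : IsChain R p' := hp.chain hcp
  have hlp' : p'.getLast? = some m := hp.getLast_eq ▸ hlp
  have hps : p'.dropLast ++ [m] = p' := List.dropLast_append_getLast? m hlp'
  have hsplit := List.isChain_append.mp (show List.Chain' R (p'.dropLast ++ [m]) by rw [hps]; exact hcp')
  obtain ⟨q't, rfl⟩ : ∃ q't, q' = m :: q't := by
    have := hq.head_eq
    cases q' with
    | nil => simp at this
    | cons a qq => exact ⟨qq, by rw [show a = m by simpa using this.symm]⟩
  have step2 : Homotopic R (p'.dropLast ++ (m :: qt)) (p'.dropLast ++ (m :: q't)) := by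
    refine Homotopic.append_left _ hsplit.1 hq hcq ?_
    intro a ha b hb
    obtain rfl : m = b := by simpa using hb
    exact hsplit.2.2 a ha m (by simp)
  have e1 : p'.dropLast ++ (m :: qt) = p' ++ qt := by
    rw [← hps]; simp
  have e2 : p'.dropLast ++ (m :: q't) = p' ++ q't := by
    rw [← hps]; simp
  rw [e1, e2] at step2
  exact step1.trans step2

lemma fromTo_glue {p q : List Y} {a m b : Y} (hp : FromTo p a m) (hq : FromTo q m b) :
    FromTo (p ++ q.tail) a b := by
  obtain ⟨qt, rfl⟩ : ∃ qt, q = m :: qt := by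
    cases q with
    | nil => simp [FromTo] at hq
    | cons x q' => exact ⟨q', by rw [show x = m by simpa using hq.1]⟩
  constructor
  · rw [List.head?_append_of_ne_nil _ (by rintro rfl; simp [FromTo] at hp)]
    exact hp.1
  · have hps : p.dropLast ++ [m] = p := List.dropLast_append_getLast? m hp.2
    have : p ++ (m :: qt).tail = p.dropLast ++ (m :: qt) := by rw [← hps]; simp
    rw [this]
    cases qt with
    | nil =>
      rw [List.getLast?_append_of_ne_nil _ (by simp)]
      simpa using hq.2
    | cons y yt =>
      rw [List.getLast?_append_of_ne_nil _ (by simp)]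
      simpa using hq.2

end WC

/-- `f` is `(ε,δ)`-refining: whenever `d(a,b) < δ` in `Y` and `a', b'` are
preimages of `a, b`, there are arbitrarily fine chains `α` from `a'` to `b'`
with `[f(α)]_ε = [a,b]_ε`. -/
def Refining {X Y : Type*} [MetricSpace X] [MetricSpace Y] (f : X → Y)
    (ε δ : ℝ) : Prop :=
  ∀ a b : Y, dist a b < δ → ∀ a' b' : X, f a' = a → f b' = b →
    ∀ κ : ℝ, 0 < κ → ∃ α : List X, MChain κ α ∧ WC.FromTo α a' b' ∧
      MHomotopic ε (α.map f) [a, b]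


lemma two_point_collapse {Y : Type*} {R : Y → Y → Prop} {a : Y} (h : R a a) :
    WC.Homotopic R [a, a] [a] :=
  Relation.ReflTransGen.single
    ⟨List.isChain_pair.mpr h, List.isChain_singleton a, rfl, rfl, [a], [], a,
      Or.inr ⟨rfl, rfl⟩⟩

lemma key_aux {X Y : Type*} [MetricSpace X] [MetricSpace Y]
    (f : X → Y) (hsurj : Function.Surjective f)
    (ε δ : ℝ) (hδ : 0 < δ) (hδε : δ < ε) (hr : Refining f ε δ) :
    ∀ β : List Y, MChain δ β → ∀ a b : Y, WC.FromTo β a b →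
      ∀ a' b' : X, f a' = a → f b' = b → ∀ κ : ℝ, 0 < κ →
        ∃ α : List X, MChain κ α ∧ WC.FromTo α a' b' ∧
          MHomotopic ε (α.map f) β := by
  intro β
  induction β with
  | nil => intro _ a b hft; simp [WC.FromTo] at hft
  | cons x t ih =>
    intro hβ a b hft a' b' ha' hb' κ hκ
    obtain rfl : x = a := by simpa [WC.FromTo] using hft.1
    cases t with
    | nil =>
      obtain rfl : x = b := by simpa [WC.FromTo] using hft.2
      obtain ⟨α, hc, hfr, hh⟩ := hr x x (by simpa using hδ) a' b' ha' hb' κ hκ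
      refine ⟨α, hc, hfr, hh.trans (two_point_collapse ?_)⟩
      simpa [MRel] using lt_trans hδ hδε
    | cons y t' =>
      have hxy : dist x y < δ := (List.isChain_cons_cons.mp hβ).1
      have hβ' : MChain δ (y :: t') := (List.isChain_cons_cons.mp hβ).2
      have hft' : WC.FromTo (y :: t') y b := ⟨rfl, by simpa [WC.FromTo] using hft.2⟩
      obtain ⟨y', hy'⟩ := hsurj y
      obtain ⟨α₁, hc₁, hfr₁, hh₁⟩ := hr x y hxy a' y' ha' hy' κ hκ
      obtain ⟨α₂, hc₂, hfr₂, hh₂⟩ := ih hβ' y b hft' y' b' hy' hb' κ hκ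
      refine ⟨α₁ ++ α₂.tail, ?_, ?_, ?_⟩
      · exact WC.isChain_glue hc₁ hc₂ hfr₁.2 hfr₂.1
      · exact WC.fromTo_glue hfr₁ hfr₂
      · rw [List.map_append, List.map_tail]
        have hcab : WC.IsChain (MRel ε) [x, y] :=
          List.isChain_pair.mpr (lt_trans hxy hδε)
        have hcyt : WC.IsChain (MRel ε) (y :: t') := by
          refine List.IsChain.imp ?_ hβ'
          intro u v h; exact lt_trans h hδε
        have hcf₁ : WC.IsChain (MRel ε) (α₁.map f) := hh₁.symm.chain hcab
        have hcf₂ : WC.IsChain (MRel ε) (α₂.map f) := hh₂.symm.chain hcyt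
        have hl₁ : (α₁.map f).getLast? = some y := by
          rw [hh₁.getLast_eq]; rfl
        have hh₂' : (α₂.map f).head? = some y := by
          rw [hh₂.head_eq]; rfl
        have := WC.homotopic_glue hh₁ hh₂ hcf₁ hcf₂ hl₁ hh₂'
        simpa [MHomotopic] using this

/-- A uniformly continuous surjection `f : X → Y` between
metric spaces is `(ε,δ)`-refining (`0 < δ < ε`) iff for every `δ`-chain `β` in
`Y` from `a` to `b`, all preimages `a'` of `a` and `b'` of `b` are joined by
arbitrarily fine chains `α` with `[f(α)]_ε = [β]_ε`. -/
theorem refining_iff_chains {X Y : Type*} [MetricSpace X] [MetricSpace Y]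
    (f : X → Y) (hf : UniformContinuous f) (hsurj : Function.Surjective f)
    (ε δ : ℝ) (hδ : 0 < δ) (hδε : δ < ε) :
    Refining f ε δ ↔
      ∀ β : List Y, MChain δ β → ∀ a b : Y, WC.FromTo β a b →
        ∀ a' b' : X, f a' = a → f b' = b → ∀ κ : ℝ, 0 < κ →
          ∃ α : List X, MChain κ α ∧ WC.FromTo α a' b' ∧
            MHomotopic ε (α.map f) β := by
  constructor
  · intro hr
    exact key_aux f hsurj ε δ hδ hδε hr
  · intro h a b hab a' b' ha' hb' κ hκ
    exact h [a, b] (List.isChain_pair.mpr hab) a b ⟨rfl, rfl⟩ a' b' ha' hb' κ hκ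
end

section
/- Let f : X → Y be a continuous function between compact metric spaces and let ε > PD(f), where PD(f) is the preimage diameter of f. Then there exists δ > 0 such that whenever x, y ∈ Y with d(x,y) < δ, the diameter of f⁻¹({x,y}) is less than ε. -/
/-- The preimage diameter of `f`: the supremum over `y` of the diameters of the
fibers `f⁻¹(y)`. -/
noncomputable def PD {X Y : Type*} [MetricSpace X] [MetricSpace Y]
    (f : X → Y) : ℝ :=
  ⨆ y : Y, Metric.diam (f ⁻¹' {y})

lemma PD_bddAbove {X Y : Type*} [MetricSpace X] [MetricSpace Y] [CompactSpace X]
    (f : X → Y) : BddAbove (Set.range fun y : Y => Metric.diam (f ⁻¹' {y})) := by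
  refine ⟨Metric.diam (Set.univ : Set X), ?_⟩
  rintro r ⟨y, rfl⟩
  exact Metric.diam_mono (Set.subset_univ _) Metric.isBounded_of_compactSpace

lemma dist_le_PD {X Y : Type*} [MetricSpace X] [MetricSpace Y] [CompactSpace X]
    (f : X → Y) {a b : X} (h : f a = f b) : dist a b ≤ PD f := by
  have h1 : dist a b ≤ Metric.diam (f ⁻¹' {f b}) :=
    Metric.dist_le_diam_of_mem
      (Metric.isBounded_of_compactSpace.subset (Set.subset_univ _)) h rfl
  exact h1.trans (le_ciSup (PD_bddAbove f) (f b))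

lemma PD_nonneg {X Y : Type*} [MetricSpace X] [MetricSpace Y] [CompactSpace X]
    (f : X → Y) : 0 ≤ PD f := by
  rcases isEmpty_or_nonempty Y with hY | hY
  · simp [PD, ciSup_of_empty]
  · exact le_trans Metric.diam_nonneg
      (le_ciSup (PD_bddAbove f) (Classical.arbitrary Y))

/-- For a continuous map `f : X → Y` between compact metric
spaces and `ε > PD(f)`, there is `δ > 0` such that whenever `d(x,y) < δ` in
`Y`, the diameter of `f⁻¹({x,y})` is less than `ε`. -/
theorem exists_delta_of_preimage_diameter {X Y : Type*}
    [MetricSpace X] [MetricSpace Y] [CompactSpace X] [CompactSpace Y]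
    (f : X → Y) (hf : Continuous f) (ε : ℝ) (hε : PD f < ε) :
    ∃ δ : ℝ, 0 < δ ∧ ∀ x y : Y, dist x y < δ →
      Metric.diam (f ⁻¹' {x, y}) < ε := by
  set ε' : ℝ := (PD f + ε) / 2 with hε'def
  have hPDε' : PD f < ε' := by rw [hε'def]; linarith
  have hε'ε : ε' < ε := by rw [hε'def]; linarith
  have hε'0 : 0 ≤ ε' := le_trans (PD_nonneg f) hPDε'.le
  set K : Set (X × X) := {p | ε' ≤ dist p.1 p.2} with hK
  have hKclosed : IsClosed K :=
    isClosed_le continuous_const (continuous_dist.comp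
      (continuous_fst.prodMk continuous_snd))
  have hKcompact : IsCompact K := hKclosed.isCompact
  have hgcont : Continuous fun p : X × X => dist (f p.1) (f p.2) :=
    continuous_dist.comp ((hf.comp continuous_fst).prodMk (hf.comp continuous_snd))
  -- key: for any δ which lower-bounds dist (f a) (f b) on K, δ works
  have key : ∀ δ : ℝ, 0 < δ →
      (∀ p ∈ K, δ ≤ dist (f p.1) (f p.2)) →
      ∀ x y : Y, dist x y < δ → Metric.diam (f ⁻¹' {x, y}) < ε := by
    intro δ hδ hlb x y hxy
    refine lt_of_le_of_lt ?_ hε'ε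
    apply Metric.diam_le_of_forall_dist_le hε'0
    intro a ha b hb
    by_contra hab
    push_neg at hab
    have hmem : (a, b) ∈ K := le_of_lt hab
    have h1 : dist (f a) (f b) ≤ dist x y := by
      rcases ha with ha | ha <;> rcases hb with hb | hb <;>
        (try simp only [Set.mem_singleton_iff] at *) <;>
        simp [ha, hb, dist_comm x y, le_of_eq, dist_nonneg]
    have := hlb _ hmem
    simp only at this
    linarith
  rcases Set.eq_empty_or_nonempty K with hKe | hKne
  · refine ⟨1, one_pos, key 1 one_pos ?_⟩
    intro p hp
    rw [hKe] at hp
    exact absurd hp (Set.notMem_empty p)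
  · obtain ⟨p₀, hp₀K, hp₀min⟩ :=
      hKcompact.exists_isMinOn hKne hgcont.continuousOn
    refine ⟨dist (f p₀.1) (f p₀.2), ?_, key _ ?_ fun p hp => hp₀min hp⟩
    · rcases (dist_nonneg : (0:ℝ) ≤ dist (f p₀.1) (f p₀.2)).lt_or_eq with h | h
      · exact h
      · exfalso
        have : f p₀.1 = f p₀.2 := by
          rwa [eq_comm, dist_eq_zero] at h
        have h2 := dist_le_PD f this
        have h3 : ε' ≤ dist p₀.1 p₀.2 := hp₀K
        linarith
    · rcases (dist_nonneg : (0:ℝ) ≤ dist (f p₀.1) (f p₀.2)).lt_or_eq with h | h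
      · exact h
      · exfalso
        have : f p₀.1 = f p₀.2 := by rwa [eq_comm, dist_eq_zero] at h
        have h2 := dist_le_PD f this
        have h3 : ε' ≤ dist p₀.1 p₀.2 := hp₀K
        linarith
end

section
/- Let f : X → Y be a continuous 1-Lipschitz surjection between compact metric spaces, where X is a geodesic space, and let ε > PD(f). Then f is ε-refining; that is, there exists δ ∈ (0,ε) such that whenever d(a,b) < δ in Y, a' ∈ f⁻¹(a), b' ∈ f⁻¹(b), then for every κ > 0 there is a κ-chain α in X from a' to b' with [f(α)]_ε = [a,b]_ε. -/
/-- `X` is a geodesic space: any two points are joined by an isometric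
embedding of `[0, d(x,y)]`. -/
def IsGeodesicSpace (X : Type*) [MetricSpace X] : Prop :=
  ∀ x y : X, ∃ γ : ℝ → X, γ 0 = x ∧ γ (dist x y) = y ∧
    ∀ s ∈ Set.Icc (0 : ℝ) (dist x y), ∀ t ∈ Set.Icc (0 : ℝ) (dist x y),
      dist (γ s) (γ t) = |s - t|

lemma collapse_aux {Z : Type*} [MetricSpace Z] (ε : ℝ) :
    ∀ (l : List Z) (y w : Z), WC.IsChain (MRel ε) (y :: l) →
      (∀ z ∈ l, dist y z < ε) → l.getLast? = some w →
      WC.Homotopic (MRel ε) (y :: l) [y, w] := by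
  intro l
  induction l with
  | nil => intro y w _ _ h; simp at h
  | cons z l' ih =>
    intro y w hchain hdist hlast
    cases l' with
    | nil =>
      simp at hlast
      subst hlast
      exact Relation.ReflTransGen.refl
    | cons z' l'' =>
      have hchain' : WC.IsChain (MRel ε) (y :: z' :: l'') := by
        have h1 : MRel ε y z' := hdist z' (by simp)
        have h2 : List.Chain' (MRel ε) (z' :: l'') :=
          (List.isChain_cons_cons.mp ((List.isChain_cons_cons.mp hchain).2)).2
        exact List.isChain_cons_cons.mpr ⟨h1, h2⟩
      have hmove : WC.Move (MRel ε) (y :: z :: z' :: l'') (y :: z' :: l'') := by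
        refine ⟨hchain, hchain', rfl, by simp [List.getLast?_cons_cons],
          [y], z' :: l'', z, Or.inr ⟨rfl, rfl⟩⟩
      exact Relation.ReflTransGen.head hmove
        (ih y w hchain' (fun t ht => hdist t (List.mem_cons_of_mem _ ht))
          (by simpa [List.getLast?_cons_cons] using hlast))

/-- A continuous `1`-Lipschitz surjection `f : X → Y` between
compact metric spaces, with `X` geodesic, is `ε`-refining for every
`ε > PD(f)`. -/
theorem refining_of_geodesic {X Y : Type*} [MetricSpace X] [MetricSpace Y]
    [CompactSpace X] [CompactSpace Y] (f : X → Y)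
    (hf : Continuous f) (hlip : LipschitzWith 1 f)
    (hsurj : Function.Surjective f) (hgeo : IsGeodesicSpace X)
    (ε : ℝ) (hε : PD f < ε) :
    ∃ δ : ℝ, 0 < δ ∧ δ < ε ∧ Refining f ε δ := by
  have hPD0 : 0 ≤ PD f := Real.iSup_nonneg fun y => Metric.diam_nonneg
  have hε0 : 0 < ε := lt_of_le_of_lt hPD0 hε
  -- fibers have diameter at most PD f
  have hfib : ∀ x x' : X, f x = f x' → dist x x' ≤ PD f := by
    intro x x' hxx
    have hb : Bornology.IsBounded (f ⁻¹' {f x'}) :=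
      isCompact_univ.isBounded.subset (Set.subset_univ _)
    have h1 : dist x x' ≤ Metric.diam (f ⁻¹' {f x'}) :=
      Metric.dist_le_diam_of_mem hb hxx rfl
    refine le_ciSup_of_le ?_ (f x') h1
    refine ⟨Metric.diam (Set.univ : Set X), ?_⟩
    rintro _ ⟨y, rfl⟩
    exact Metric.diam_mono (Set.subset_univ _) isCompact_univ.isBounded
  -- uniform control: points with close images are close
  have hηex : ∃ η : ℝ, 0 < η ∧ ∀ x x' : X, dist (f x) (f x') < η → dist x x' < ε := by
    by_contra hc
    push_neg at hc
    choose u v h1 h2 using fun n : ℕ => hc (1 / (n + 1)) (by positivity)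
    obtain ⟨q, -, φ, hφ, hlim⟩ := isCompact_univ.tendsto_subseq
      (fun n => Set.mem_univ ((u n, v n) : X × X))
    have hu : Filter.Tendsto (fun n => u (φ n)) Filter.atTop (nhds q.1) :=
      (continuous_fst.tendsto q).comp hlim
    have hv : Filter.Tendsto (fun n => v (φ n)) Filter.atTop (nhds q.2) :=
      (continuous_snd.tendsto q).comp hlim
    have hdt : Filter.Tendsto (fun n => dist (f (u (φ n))) (f (v (φ n))))
        Filter.atTop (nhds (dist (f q.1) (f q.2))) :=
      ((hf.tendsto _).comp hu).dist ((hf.tendsto _).comp hv)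
    have h0 : Filter.Tendsto (fun n : ℕ => 1 / ((φ n : ℝ) + 1)) Filter.atTop (nhds 0) :=
      tendsto_one_div_add_atTop_nhds_zero_nat.comp hφ.tendsto_atTop
    have hd0 : dist (f q.1) (f q.2) = 0 :=
      tendsto_nhds_unique hdt
        (squeeze_zero (fun n => dist_nonneg) (fun n => (h1 (φ n)).le) h0)
    have hεq : ε ≤ dist q.1 q.2 := ge_of_tendsto' (hu.dist hv) (fun n => h2 (φ n))
    have := hfib q.1 q.2 (dist_eq_zero.mp hd0)
    linarith
  obtain ⟨η, hη0, hηp⟩ := hηex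
  refine ⟨min η (ε / 2), by positivity,
    lt_of_le_of_lt (min_le_right _ _) (by linarith), ?_⟩
  intro a b hab a' b' ha' hb' κ hκ
  have hL : dist a' b' < ε := by
    apply hηp
    rw [ha', hb']
    exact hab.trans_le (min_le_left _ _)
  obtain ⟨γ, hγ0, hγL, hiso⟩ := hgeo a' b'
  set L := dist a' b' with hLdef
  have hL0 : 0 ≤ L := dist_nonneg
  set m := min κ ε with hmdef
  have hm : 0 < m := lt_min hκ hε0
  obtain ⟨n, hn⟩ := exists_nat_gt (L / m)
  have hn0 : 0 < (n : ℝ) := lt_of_le_of_lt (div_nonneg hL0 hm.le) hn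
  set s := L / n with hsdef
  have hs0 : 0 ≤ s := div_nonneg hL0 hn0.le
  have hns : (n : ℝ) * s = L := by
    rw [hsdef, mul_div_assoc', mul_comm, mul_div_assoc, div_self hn0.ne', mul_one]
  have hsm : s < m := by
    rw [hsdef, div_lt_iff₀ hn0]
    calc L < n * m := (div_lt_iff₀ hm).mp hn
    _ = m * n := mul_comm _ _
  set g : ℕ → X := fun i => γ (i * s) with hgdef
  have hmem : ∀ i : ℕ, i ≤ n → (i : ℝ) * s ∈ Set.Icc (0 : ℝ) L := by
    intro i hi
    constructor
    · positivity
    · calc (i : ℝ) * s ≤ n * s :=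
            mul_le_mul_of_nonneg_right (Nat.cast_le.mpr hi) hs0
      _ = L := hns
  have hdg : ∀ i j : ℕ, i ≤ n → j ≤ n →
      dist (g i) (g j) = |(i : ℝ) * s - (j : ℝ) * s| := by
    intro i j hi hj
    exact hiso _ (hmem i hi) _ (hmem j hj)
  have hstep : ∀ i : ℕ, i < n → dist (g i) (g (i + 1)) = s := by
    intro i hi
    rw [hdg i (i+1) hi.le (Nat.succ_le_of_lt hi)]
    have : (i : ℝ) * s - ((i : ℕ) + 1 : ℕ) * s = -s := by push_cast; ring
    rw [this, abs_neg, abs_of_nonneg hs0]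
  have hfar : ∀ i : ℕ, i ≤ n → dist (g 0) (g i) ≤ L := by
    intro i hi
    rw [hdg 0 i (Nat.zero_le _) hi]
    push_cast
    rw [zero_mul, zero_sub, abs_neg, abs_of_nonneg (by positivity)]
    exact le_of_le_of_eq (mul_le_mul_of_nonneg_right (Nat.cast_le.mpr hi) hs0) hns
  have hg0 : g 0 = a' := by
    simp only [hgdef, Nat.cast_zero, zero_mul]
    exact hγ0
  have hgn : g n = b' := by
    simp only [hgdef, hns]
    exact hγL
  refine ⟨(List.range (n + 1)).map g, ?_, ⟨?_, ?_⟩, ?_⟩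
  · -- MChain κ
    rw [MChain, WC.IsChain, List.Chain', List.isChain_map, List.isChain_range_succ]
    intro i hi
    show dist (g i) (g (i + 1)) < κ
    rw [hstep i hi]
    exact hsm.trans_le (min_le_left _ _)
  · -- head
    rw [List.range_succ_eq_map, List.map_cons, List.head?_cons, hg0]
  · -- last
    rw [List.range_succ, List.map_append, List.map_cons, List.map_nil,
      List.getLast?_concat, hgn]
  · -- homotopy of image chain
    have himg : ((List.range (n + 1)).map g).map f
        = f (g 0) :: (List.range n).map (fun i => f (g (i + 1))) := by
      rw [List.map_map, List.range_succ_eq_map, List.map_cons, List.map_map]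
      rfl
    have hlipd : ∀ x x' : X, dist (f x) (f x') ≤ dist x x' := by
      intro x x'
      simpa using hlip.dist_le_mul x x'
    have hga : f (g 0) = a := by rw [hg0, ha']
    rw [MHomotopic, himg, hga]
    have := collapse_aux ε ((List.range n).map (fun i => f (g (i + 1)))) a b ?_ ?_ ?_
    · exact this
    · -- chain
      rw [WC.IsChain, List.Chain', ← hga, ← himg, List.map_map, List.isChain_map,
        List.isChain_range_succ]
      intro i hi
      show dist (f (g i)) (f (g (i + 1))) < ε
      calc dist (f (g i)) (f (g (i + 1))) ≤ dist (g i) (g (i + 1)) := hlipd _ _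
      _ = s := hstep i hi
      _ < ε := hsm.trans_le (min_le_right _ _)
    · -- all points close to a
      intro z hz
      obtain ⟨i, hi, rfl⟩ := List.mem_map.mp hz
      rw [List.mem_range] at hi
      rw [← hga]
      calc dist (f (g 0)) (f (g (i + 1))) ≤ dist (g 0) (g (i + 1)) := hlipd _ _
      _ ≤ L := hfar (i + 1) (Nat.succ_le_of_lt hi)
      _ < ε := hL
    · -- last of the tail
      obtain ⟨k, rfl⟩ : ∃ k, n = k + 1 := by
        rcases Nat.exists_eq_succ_of_ne_zero (by exact_mod_cast hn0.ne') with ⟨k, hk⟩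
        exact ⟨k, hk⟩
      rw [List.range_succ, List.map_append, List.map_cons, List.map_nil,
        List.getLast?_concat, ← hb', hgn]
end
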